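/- Let (X, 𝒜) be a measurable space with two finite measures λ and μ, where μ is a probability measure, and let T : X → X be measure-preserving and ergodic with respect to μ. Suppose there is a constant C > 0 with μ(A) ≥ C·λ(A) for every measurable A, and suppose (Δ_k)_{k ≥ 1} is a sequence of pairwise disjoint measurable sets covering X with λ(Δ_k) = 1/((k+1)(k+2)) for every k ≥ 1. Define f : X → ℝ by f(x) = k for x ∈ Δ_k. Then for μ-almost every x (and hence also for λ-almost every x), the Birkhoff averages diverge: (1/n)·∑_{j=0}^{n−1} f(Tʲx) → ∞ as n → ∞. -/

import Mathlib

open MeasureTheory Filter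
open scoped ENNReal Topology

section Garsia
variable {X : Type*} [MeasurableSpace X]

/-- `Pm T ψ N x = max (0, S₁ x, …, S_N x)` where `S_k` are Birkhoff sums, defined recursively. -/
noncomputable def Pm (T : X → X) (ψ : X → ℝ) : ℕ → X → ℝ
  | 0 => fun _ => 0
  | (N+1) => fun x => max 0 (ψ x + Pm T ψ N (T x))

variable {T : X → X} {ψ : X → ℝ}

omit [MeasurableSpace X] in
lemma birkhoff_shift (n : ℕ) (x : X) :
    ∑ j ∈ Finset.range (n+1), ψ (T^[j] x)
      = ψ x + ∑ j ∈ Finset.range n, ψ (T^[j] (T x)) := by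
  rw [Finset.sum_range_succ']
  simp [Function.iterate_succ_apply, add_comm]

omit [MeasurableSpace X] in
lemma Pm_eq (N : ℕ) (x : X) :
    Pm T ψ N x = (Finset.range (N+1)).sup' (by simp)
      (fun k => ∑ j ∈ Finset.range k, ψ (T^[j] x)) := by
  induction N generalizing x with
  | zero => simp [Pm]
  | succ N ih =>
    have h1 : ψ x + (Finset.range (N+1)).sup' (by simp)
        (fun k => ∑ j ∈ Finset.range k, ψ (T^[j] (T x)))
        = (Finset.range (N+1)).sup' (by simp)
          (fun k => ψ x + ∑ j ∈ Finset.range k, ψ (T^[j] (T x))) :=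
      Finset.comp_sup'_eq_sup'_comp _ (fun y => ψ x + y)
        (fun a b => (max_add_add_left (ψ x) a b).symm)
    show max 0 (ψ x + Pm T ψ N (T x)) = _
    rw [ih, h1]
    apply le_antisymm
    · apply max_le
      · exact Finset.le_sup' (f := fun k => ∑ j ∈ Finset.range k, ψ (T^[j] x))
          (b := 0) (by simp) |>.trans_eq' (by simp)
      · apply Finset.sup'_le
        intro k hk
        rw [← birkhoff_shift]
        exact Finset.le_sup' (f := fun k => ∑ j ∈ Finset.range k, ψ (T^[j] x))
          (b := k+1) (by simp at hk ⊢; omega)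
    · apply Finset.sup'_le
      intro k hk
      rcases Nat.eq_zero_or_eq_succ_pred k with hk0 | hk1
      · subst hk0; simp
      · rw [hk1, birkhoff_shift]
        refine le_max_of_le_right ?_
        exact Finset.le_sup' (f := fun k => ψ x + ∑ j ∈ Finset.range k, ψ (T^[j] (T x)))
          (b := k.pred) (by simp at hk ⊢; omega)
end Garsia

section G2
variable {X : Type*} [MeasurableSpace X] {T : X → X} {ψ : X → ℝ}

lemma Pm_nonneg (N : ℕ) (x : X) : 0 ≤ Pm T ψ N x := by
  cases N with
  | zero => exact le_refl _
  | succ N => exact le_max_left _ _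

lemma Pm_mono (N : ℕ) : ∀ x, Pm T ψ N x ≤ Pm T ψ (N+1) x := by
  induction N with
  | zero => intro x; exact Pm_nonneg 1 x
  | succ N ih =>
    intro x
    exact max_le (le_max_left _ _) (le_max_of_le_right (add_le_add le_rfl (ih (T x))))

lemma Pm_measurable (hT : Measurable T) (hψ : Measurable ψ) (N : ℕ) :
    Measurable (Pm T ψ N) := by
  induction N with
  | zero => exact measurable_const
  | succ N ih => exact measurable_const.max (hψ.add (ih.comp hT))

lemma Pm_integrable {μ : Measure X} (hT : MeasurePreserving T μ μ) (hψ : Measurable ψ)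
    (hint : Integrable ψ μ) (N : ℕ) : Integrable (Pm T ψ N) μ := by
  induction N with
  | zero => exact integrable_zero X ℝ μ
  | succ N ih =>
    have : Integrable (Pm T ψ N ∘ T) μ :=
      (hT.integrable_comp (Pm_measurable hT.measurable hψ N).aestronglyMeasurable).2 ih
    have h2 : Integrable (fun x => ψ x + Pm T ψ N (T x)) μ := hint.add this
    have h3 : Pm T ψ (N+1) = fun x => max (ψ x + Pm T ψ N (T x)) 0 := by
      funext x; simp [Pm, max_comm]
    rw [h3]; exact h2.pos_part

/-- Garsia's maximal-ergodic-theorem argument: if almost every point has some positive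
Birkhoff sum, then the integral of `ψ` is nonnegative. -/
lemma garsia {μ : Measure X} [IsProbabilityMeasure μ] (hT : MeasurePreserving T μ μ)
    (hψ : Measurable ψ) (hint : Integrable ψ μ)
    (hfull : ∀ᵐ x ∂μ, ∃ n, 0 < ∑ j ∈ Finset.range n, ψ (T^[j] x)) :
    0 ≤ ∫ x, ψ x ∂μ := by
  set E : ℕ → Set X := fun N => {x | 0 < Pm T ψ N x} with hE
  have hEm : ∀ N, MeasurableSet (E N) := fun N =>
    measurableSet_lt measurable_const (Pm_measurable hT.measurable hψ N)
  have hEmono : Monotone E := by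
    apply monotone_nat_of_le_succ
    intro N x hx
    exact lt_of_lt_of_le hx (Pm_mono N x)
  -- each finite-level integral is nonnegative
  have key : ∀ N, 0 ≤ ∫ x in E N, ψ x ∂μ := by
    intro N
    cases N with
    | zero => simp [hE, Pm]
    | succ N =>
      set Q := Pm T ψ (N+1) with hQ
      have hQm : Measurable Q := Pm_measurable hT.measurable hψ (N+1)
      have hQi : Integrable Q μ := Pm_integrable hT hψ hint (N+1)
      have hQTi : Integrable (fun x => Q (T x)) μ :=
        (hT.integrable_comp hQm.aestronglyMeasurable).2 hQi
      -- pointwise inequality on E (N+1)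
      have hkey : ∀ x ∈ E (N+1), Q x - Q (T x) ≤ ψ x := by
        intro x hx
        have hx' : 0 < Pm T ψ (N+1) x := hx
        have heq : Pm T ψ (N+1) x = ψ x + Pm T ψ N (T x) := by
          have : max 0 (ψ x + Pm T ψ N (T x)) = Pm T ψ (N+1) x := rfl
          rw [← this] at hx' ⊢
          rcases max_cases 0 (ψ x + Pm T ψ N (T x)) with ⟨h1, _⟩ | ⟨h1, _⟩
          · exact absurd (h1 ▸ hx') (lt_irrefl 0)
          · exact h1
        have : Q x - Q (T x) ≤ Q x - Pm T ψ N (T x) :=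
          sub_le_sub_left (Pm_mono N (T x)) _
        rw [hQ] at this ⊢
        calc Pm T ψ (N+1) x - Pm T ψ (N+1) (T x) ≤ Pm T ψ (N+1) x - Pm T ψ N (T x) := this
          _ = ψ x := by rw [heq]; ring
      have h1 : ∫ x in E (N+1), (Q x - Q (T x)) ∂μ ≤ ∫ x in E (N+1), ψ x ∂μ := by
        apply setIntegral_mono_on ((hQi.sub hQTi).integrableOn) hint.integrableOn (hEm (N+1)) hkey
      refine le_trans ?_ h1
      rw [integral_sub (hQi.integrableOn) (hQTi.integrableOn)]
      have h2 : ∫ x in E (N+1), Q x ∂μ = ∫ x, Q x ∂μ := by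
        rw [← integral_add_compl (hEm (N+1)) hQi]
        have h0 : ∫ x in (E (N+1))ᶜ, Q x ∂μ = 0 := by
          have hz : ∀ x ∈ (E (N+1))ᶜ, Q x = (0:ℝ) := fun x hx =>
            le_antisymm (not_lt.1 hx) (Pm_nonneg _ x)
          rw [setIntegral_congr_fun (hEm (N+1)).compl hz, integral_zero]
        rw [h0, add_zero]
      have h3 : ∫ x in E (N+1), Q (T x) ∂μ ≤ ∫ x, Q (T x) ∂μ :=
        setIntegral_le_integral hQTi (Filter.Eventually.of_forall fun x => Pm_nonneg _ _)
      have h4 : ∫ x, Q (T x) ∂μ = ∫ x, Q x ∂μ := by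
        have hmm : AEStronglyMeasurable Q (Measure.map T μ) := by
          rw [hT.map_eq]; exact hQm.aestronglyMeasurable
        have := integral_map hT.measurable.aemeasurable hmm
        rw [hT.map_eq] at this
        exact this.symm
      rw [h2]
      have := sub_nonneg.2 (h3.trans (le_of_eq h4))
      linarith
  have hUnion : (⋃ N, E N) =ᵐ[μ] Set.univ := by
    rw [Filter.eventuallyEq_univ]
    filter_upwards [hfull] with x hx
    obtain ⟨n, hn⟩ := hx
    refine Set.mem_iUnion.2 ⟨n, ?_⟩
    show 0 < Pm T ψ n x
    rw [Pm_eq]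
    exact lt_of_lt_of_le hn
      (Finset.le_sup' (f := fun k => ∑ j ∈ Finset.range k, ψ (T^[j] x)) (b := n) (by simp))
  have hten : Tendsto (fun N => ∫ x in E N, ψ x ∂μ) atTop (𝓝 (∫ x in ⋃ N, E N, ψ x ∂μ)) :=
    tendsto_setIntegral_of_monotone hEm hEmono hint.integrableOn
  have hlim : (0:ℝ) ≤ ∫ x in ⋃ N, E N, ψ x ∂μ := ge_of_tendsto' hten key
  calc (0:ℝ) ≤ ∫ x in ⋃ N, E N, ψ x ∂μ := hlim
    _ = ∫ x in Set.univ, ψ x ∂μ := setIntegral_congr_set hUnion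
    _ = ∫ x, ψ x ∂μ := by rw [Measure.restrict_univ]
end G2

section G3
variable {X : Type*} [MeasurableSpace X]

lemma ergodic_sum_lb {μ : Measure X} [IsProbabilityMeasure μ] {T : X → X} (hT : Ergodic T μ)
    {φ : X → ℝ} (hφm : Measurable φ) (hφi : Integrable φ μ) {b : ℝ}
    (hb : b < ∫ x, φ x ∂μ) :
    ∀ᵐ x ∂μ, ∃ c : ℕ, ∀ n : ℕ, b * n - c ≤ ∑ j ∈ Finset.range n, φ (T^[j] x) := by
  set ψ : X → ℝ := fun x => b - φ x with hψ
  have hψm : Measurable ψ := measurable_const.sub hφm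
  have hψi : Integrable ψ μ := (integrable_const b).sub hφi
  set Sn : ℕ → X → ℝ := fun n x => ∑ j ∈ Finset.range n, ψ (T^[j] x) with hSn
  have hSnm : ∀ n, Measurable (Sn n) := fun n =>
    Finset.measurable_sum _ (fun j _ => hψm.comp (hT.measurable.iterate j))
  have hSn_eq : ∀ n x, Sn n x = b * n - ∑ j ∈ Finset.range n, φ (T^[j] x) := by
    intro n x
    simp only [hSn, hψ, Finset.sum_sub_distrib, Finset.sum_const, Finset.card_range,
      nsmul_eq_mul]
    ring
  have hshift : ∀ n x, Sn (n+1) x = ψ x + Sn n (T x) := fun n x => birkhoff_shift n x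
  set E : Set X := ⋂ (c : ℕ), ⋃ (n : ℕ), {x | (c : ℝ) < Sn n x} with hE
  have hEmeas : MeasurableSet E :=
    MeasurableSet.iInter fun c => MeasurableSet.iUnion fun n =>
      measurableSet_lt measurable_const (hSnm n)
  have hmemE : ∀ x, x ∈ E ↔ ∀ c : ℕ, ∃ n, (c : ℝ) < Sn n x := by
    intro x
    simp only [hE, Set.mem_iInter, Set.mem_iUnion, Set.mem_setOf_eq]
  have hinv : T ⁻¹' E = E := by
    ext x
    rw [Set.mem_preimage, hmemE, hmemE]
    constructor
    · intro h c
      obtain ⟨c₃, hc₃⟩ := exists_nat_ge ((c : ℝ) - ψ x)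
      obtain ⟨n, hn⟩ := h c₃
      exact ⟨n + 1, by rw [hshift]; linarith⟩
    · intro h c
      obtain ⟨c₂, hc₂⟩ := exists_nat_ge (max ((c : ℝ) + ψ x) 0)
      obtain ⟨n, hn⟩ := h c₂
      have hc₂0 : (0:ℝ) ≤ c₂ := le_trans (le_max_right _ _) hc₂
      have hc₂1 : (c:ℝ) + ψ x ≤ c₂ := le_trans (le_max_left _ _) hc₂
      cases n with
      | zero => simp [hSn] at hn; linarith
      | succ m =>
        refine ⟨m, ?_⟩
        rw [hshift] at hn
        linarith
  rcases hT.toPreErgodic.ae_empty_or_univ hEmeas hinv with hcase | hcase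
  · -- E is almost empty : good case
    have h0 : μ E = 0 := ae_eq_empty.1 hcase
    have hae : ∀ᵐ x ∂μ, x ∉ E := measure_eq_zero_iff_ae_notMem.1 h0
    filter_upwards [hae] with x hx
    rw [hmemE] at hx
    push_neg at hx
    obtain ⟨c, hc⟩ := hx
    refine ⟨c, fun n => ?_⟩
    have := hc n
    rw [hSn_eq] at this
    linarith
  · -- E is almost everything : contradiction with Garsia's lemma
    exfalso
    have hfull : ∀ᵐ x ∂μ, ∃ n, 0 < ∑ j ∈ Finset.range n, ψ (T^[j] x) := by
      have := Filter.eventuallyEq_univ.1 hcase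
      filter_upwards [this] with x hx
      obtain ⟨n, hn⟩ := (hmemE x).1 hx 0
      have h0n : (0:ℝ) < Sn n x := by exact_mod_cast hn
      exact ⟨n, h0n⟩
    have hlow := garsia hT.toMeasurePreserving hψm hψi hfull
    have hint : ∫ x, ψ x ∂μ = b - ∫ x, φ x ∂μ := by
      rw [hψ]
      rw [integral_sub (integrable_const b) hφi]
      simp
    rw [hint] at hlow
    linarith
end G3


/-- Birkhoff-average divergence: if T is ergodic for the probability measure μ, μ
dominates C·lam, the sets Δ_k (k ≥ 1) are disjoint, measurable, cover X and have
lam-measure 1/((k+1)(k+2)), and f = k on Δ_k, then the Birkhoff averages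
(1/n)∑_{j<n} f(Tʲx) tend to ∞ for μ-a.e. x, and hence for lam-a.e. x. -/
theorem stmt19 {X : Type*} [MeasurableSpace X]
    (lam mu : Measure X) [IsFiniteMeasure lam] [IsProbabilityMeasure mu]
    (T : X → X) (hT : Ergodic T mu)
    (C : ℝ) (hC : 0 < C)
    (hdom : ∀ A : Set X, MeasurableSet A → ENNReal.ofReal C * lam A ≤ mu A)
    (Δ : ℕ → Set X)
    (hmeas : ∀ k : ℕ, 1 ≤ k → MeasurableSet (Δ k))
    (hdisj : ∀ j k : ℕ, 1 ≤ j → 1 ≤ k → j ≠ k → Disjoint (Δ j) (Δ k))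
    (hcover : (⋃ k : ℕ, Δ (k + 1)) = Set.univ)
    (hlam : ∀ k : ℕ, 1 ≤ k →
      lam (Δ k) = 1 / (((k : ℝ≥0∞) + 1) * ((k : ℝ≥0∞) + 2)))
    (f : X → ℝ)
    (hf : ∀ k : ℕ, 1 ≤ k → ∀ x ∈ Δ k, f x = (k : ℝ)) :
    (∀ᵐ x ∂mu,
      Tendsto (fun n : ℕ => (∑ j ∈ Finset.range n, f (T^[j] x)) / n) atTop atTop) ∧
    (∀ᵐ x ∂lam,
      Tendsto (fun n : ℕ => (∑ j ∈ Finset.range n, f (T^[j] x)) / n) atTop atTop) := by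
  -- f is measurable
  have hfm : Measurable f := by
    intro s hs
    have hpre : f ⁻¹' s = ⋃ k : ℕ, ⋃ (_ : ((k+1 : ℕ) : ℝ) ∈ s), Δ (k+1) := by
      ext x
      simp only [Set.mem_preimage, Set.mem_iUnion]
      constructor
      · intro hxs
        have hx : x ∈ ⋃ k : ℕ, Δ (k+1) := by rw [hcover]; trivial
        obtain ⟨k, hk⟩ := Set.mem_iUnion.1 hx
        exact ⟨k, by rwa [hf (k+1) (by omega) x hk] at hxs, hk⟩
      · rintro ⟨k, hks, hkx⟩
        rw [hf (k+1) (by omega) x hkx]; exact hks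
    rw [hpre]
    exact MeasurableSet.iUnion fun k => MeasurableSet.iUnion fun _ => hmeas (k+1) (by omega)
  -- f ≥ 1 everywhere
  have hf1 : ∀ x, (1:ℝ) ≤ f x := by
    intro x
    have hx : x ∈ ⋃ k : ℕ, Δ (k+1) := by rw [hcover]; trivial
    obtain ⟨k, hk⟩ := Set.mem_iUnion.1 hx
    rw [hf (k+1) (by omega) x hk]
    exact_mod_cast Nat.one_le_iff_ne_zero.2 (by omega)
  set F : X → ℝ≥0∞ := fun x => ENNReal.ofReal (f x) with hF
  have hFm : Measurable F := ENNReal.measurable_ofReal.comp hfm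
  -- the lam-lintegral of f is infinite
  have hlamtop : ∫⁻ x, F x ∂lam = ⊤ := by
    have h1 : ∫⁻ x, F x ∂lam = ∑' k : ℕ, ∫⁻ x in Δ (k+1), F x ∂lam := by
      rw [← setLIntegral_univ, ← hcover]
      exact lintegral_iUnion (fun k => hmeas _ (by omega))
        (fun i j hij => hdisj (i+1) (j+1) (by omega) (by omega) (by omega)) F
    have h2 : ∀ k : ℕ, ∫⁻ x in Δ (k+1), F x ∂lam
        = ((k+1 : ℕ) : ℝ≥0∞) * lam (Δ (k+1)) := by
      intro k
      have hcongr : ∀ᵐ x ∂lam, x ∈ Δ (k+1) → F x = ((k+1 : ℕ) : ℝ≥0∞) :=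
        ae_of_all _ fun x hx => by
          rw [hF]; simp only []
          rw [hf (k+1) (by omega) x hx, ENNReal.ofReal_natCast]
      rw [setLIntegral_congr_fun_ae (hmeas _ (by omega)) hcongr, setLIntegral_const]
    rw [h1]
    have h3 : (∑' k : ℕ, ∫⁻ x in Δ (k+1), F x ∂lam)
        = ∑' k : ℕ, ((k+1 : ℕ) : ℝ≥0∞) * lam (Δ (k+1)) := tsum_congr h2
    rw [h3]
    by_contra hne
    have hsum := ENNReal.summable_toReal hne
    have hval : ∀ k : ℕ, ((((k+1 : ℕ) : ℝ≥0∞)) * lam (Δ (k+1))).toReal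
        = ((k:ℝ)+1) * (1/(((k:ℝ)+2)*((k:ℝ)+3))) := by
      intro k
      rw [hlam (k+1) (by omega)]
      have e1 : (((k+1 : ℕ) : ℝ≥0∞)+1) = ((k+2 : ℕ) : ℝ≥0∞) := by push_cast; ring
      have e2 : (((k+1 : ℕ) : ℝ≥0∞)+2) = ((k+3 : ℕ) : ℝ≥0∞) := by push_cast; ring
      rw [e1, e2]
      simp only [ENNReal.toReal_mul, ENNReal.toReal_div, ENNReal.toReal_natCast,
        ENNReal.toReal_one]
      push_cast
      ring
    have hsum2 : Summable (fun k : ℕ => ((k:ℝ)+1) * (1/(((k:ℝ)+2)*((k:ℝ)+3)))) :=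
      hsum.congr hval
    have hsum3 : Summable (fun k : ℕ => (1/2 : ℝ) * (1/((k:ℝ)+3))) := by
      apply Summable.of_nonneg_of_le (fun k => by positivity) (fun k => ?_) hsum2
      rw [mul_one_div, mul_one_div, div_le_div_iff₀ (by positivity) (by positivity)]
      have : (0:ℝ) ≤ (k:ℝ) := Nat.cast_nonneg k
      nlinarith
    have hsum4 : Summable (fun k : ℕ => 1/((k:ℝ)+3)) :=
      (summable_mul_left_iff (by norm_num : (1/2 : ℝ) ≠ 0)).1 hsum3
    have hsum5 : Summable (fun n : ℕ => 1/(n:ℝ)) := by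
      refine (summable_nat_add_iff 3).1 (hsum4.congr fun n => ?_)
      push_cast
      ring
    exact Real.not_summable_one_div_natCast hsum5
  -- the mu-lintegral of f is infinite
  have hle : (ENNReal.ofReal C) • lam ≤ mu :=
    Measure.le_iff.2 fun s hs => by
      simpa [Measure.smul_apply, smul_eq_mul] using hdom s hs
  have hmutop : ∫⁻ x, F x ∂mu = ⊤ := by
    rw [eq_top_iff]
    calc (⊤:ℝ≥0∞) = ENNReal.ofReal C * ∫⁻ x, F x ∂lam := by
          rw [hlamtop, ENNReal.mul_top (by simpa using (ENNReal.ofReal_pos.2 hC).ne')]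
      _ = ∫⁻ x, F x ∂((ENNReal.ofReal C) • lam) := by rw [lintegral_smul_measure, smul_eq_mul]
      _ ≤ ∫⁻ x, F x ∂mu := lintegral_mono' hle (le_refl _)
  -- truncations have arbitrarily large integrals
  have hM : ∀ b : ℝ, ∃ M : ℕ, b < ∫ x, min (f x) (M:ℝ) ∂mu := by
    intro b
    have hmono : Monotone (fun M : ℕ => fun x => min (F x) (M : ℝ≥0∞)) := by
      intro M N h x
      exact min_le_min (le_refl _) (by exact_mod_cast Nat.cast_le.2 h)
    have hsup : ⨆ M : ℕ, ∫⁻ x, min (F x) (M : ℝ≥0∞) ∂mu = ⊤ := by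
      rw [← lintegral_iSup (fun M => hFm.min measurable_const)
        (fun M N h x => hmono h x)]
      rw [← hmutop]
      congr 1
      funext x
      apply le_antisymm
      · exact iSup_le fun M => min_le_left _ _
      · obtain ⟨M, hMx⟩ := ENNReal.exists_nat_gt (ENNReal.ofReal_ne_top : F x ≠ ⊤)
        exact le_iSup_of_le M (le_min (le_refl _) hMx.le)
    have hlt : ENNReal.ofReal (max b 0) < ⨆ M : ℕ, ∫⁻ x, min (F x) (M : ℝ≥0∞) ∂mu := by
      rw [hsup]; exact ENNReal.ofReal_lt_top
    obtain ⟨M, hMlt⟩ := lt_iSup_iff.1 hlt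
    refine ⟨M, ?_⟩
    have hLne : ∫⁻ x, min (F x) (M : ℝ≥0∞) ∂mu ≠ ⊤ := by
      refine ne_of_lt (lt_of_le_of_lt (lintegral_mono fun x => min_le_right _ _) ?_)
      simp [lintegral_const]
    have hofReal : ∀ x, ENNReal.ofReal (min (f x) (M:ℝ)) = min (F x) (M : ℝ≥0∞) := by
      intro x
      have hmonoOf : Monotone ENNReal.ofReal := fun a c h => ENNReal.ofReal_le_ofReal h
      rw [hmonoOf.map_min, ENNReal.ofReal_natCast]
    have hint_eq : ∫ x, min (f x) (M:ℝ) ∂mu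
        = (∫⁻ x, min (F x) (M : ℝ≥0∞) ∂mu).toReal := by
      rw [integral_eq_lintegral_of_nonneg_ae
        (Filter.Eventually.of_forall fun x => le_min (le_trans zero_le_one (hf1 x)) (Nat.cast_nonneg M))
        ((hfm.min measurable_const).aestronglyMeasurable)]
      congr 1
      exact lintegral_congr fun x => hofReal x
    rw [hint_eq]
    calc b ≤ max b 0 := le_max_left _ _
      _ = (ENNReal.ofReal (max b 0)).toReal := (ENNReal.toReal_ofReal (le_max_right _ _)).symm
      _ < (∫⁻ x, min (F x) (M : ℝ≥0∞) ∂mu).toReal := by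
          exact (ENNReal.toReal_lt_toReal ENNReal.ofReal_ne_top hLne).2 hMlt
  -- the main almost-everywhere statement for mu
  have key : ∀ b : ℕ, ∀ᵐ x ∂mu, ∀ᶠ n in atTop,
      (b:ℝ) ≤ (∑ j ∈ Finset.range n, f (T^[j] x)) / n := by
    intro b
    obtain ⟨M, hM'⟩ := hM ((b:ℝ)+1)
    set φ : X → ℝ := fun x => min (f x) (M:ℝ) with hφ
    have hφm : Measurable φ := hfm.min measurable_const
    have hφnn : ∀ x, 0 ≤ φ x := fun x =>
      le_min (le_trans zero_le_one (hf1 x)) (Nat.cast_nonneg M)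
    have hφi : Integrable φ mu := by
      refine Integrable.mono' (integrable_const (M:ℝ)) hφm.aestronglyMeasurable
        (Filter.Eventually.of_forall fun x => ?_)
      rw [Real.norm_eq_abs, abs_of_nonneg (hφnn x)]
      exact min_le_right _ _
    have hergodic := ergodic_sum_lb hT hφm hφi (b := (b:ℝ)+1) hM'
    filter_upwards [hergodic] with x hx
    obtain ⟨c, hc⟩ := hx
    rw [eventually_atTop]
    refine ⟨max c 1, fun n hn => ?_⟩
    have hn1 : 1 ≤ n := le_trans (le_max_right _ _) hn
    have hnc : (c:ℝ) ≤ (n:ℝ) := by exact_mod_cast le_trans (le_max_left _ _) hn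
    have h1 : ((b:ℝ)+1) * n - c ≤ ∑ j ∈ Finset.range n, φ (T^[j] x) := hc n
    have h2 : ∑ j ∈ Finset.range n, φ (T^[j] x) ≤ ∑ j ∈ Finset.range n, f (T^[j] x) :=
      Finset.sum_le_sum fun j _ => min_le_left _ _
    have hnpos : (0:ℝ) < n := by exact_mod_cast hn1
    rw [le_div_iff₀ hnpos]
    nlinarith
  have hmu_ae : ∀ᵐ x ∂mu,
      Tendsto (fun n : ℕ => (∑ j ∈ Finset.range n, f (T^[j] x)) / n) atTop atTop := by
    filter_upwards [ae_all_iff.2 key] with x hx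
    rw [tendsto_atTop]
    intro b
    obtain ⟨m, hm⟩ := exists_nat_ge b
    exact (hx m).mono fun n hn => le_trans hm hn
  refine ⟨hmu_ae, ?_⟩
  -- transfer nullity of the bad set from mu to lam
  set B : Set X := {x | ¬ Tendsto (fun n : ℕ => (∑ j ∈ Finset.range n, f (T^[j] x)) / n)
    atTop atTop} with hB
  have hmuB : mu B = 0 := hmu_ae
  have hmuB' : mu (toMeasurable mu B) = 0 := by rw [measure_toMeasurable]; exact hmuB
  have hlamB' : lam (toMeasurable mu B) = 0 := by
    have hd := hdom (toMeasurable mu B) (measurableSet_toMeasurable _ _)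
    rw [hmuB'] at hd
    have h0 : ENNReal.ofReal C * lam (toMeasurable mu B) = 0 :=
      le_antisymm hd zero_le
    rcases mul_eq_zero.1 h0 with h | h
    · exact absurd h (by simpa using (ENNReal.ofReal_pos.2 hC).ne')
    · exact h
  have hlamB : lam B = 0 :=
    le_antisymm (le_trans (measure_mono (subset_toMeasurable _ _)) hlamB'.le) zero_le
  exact hlamB
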